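/- For real numbers α, β with 0 ≤ α ≤ 1, 0 ≤ β < 1, and t > 0 such that α² + t^{-1}β² ≤ 1, one has (1 − 2αβ + β²)/(1 − β²) ≥ 1/(1 + √t), and the bound 1/(1+√t) is attained: min over α,β of (1−2αβ+β²)/(1−β²) subject to α² + t^{-1}β² ≤ 1 equals 1/(1+√t). -/

import Mathlib

theorem stmt_11 (t : ℝ) (ht : 0 < t) :
    (∀ α β : ℝ, 0 ≤ α → α ≤ 1 → 0 ≤ β → β < 1 → α ^ 2 + β ^ 2 / t ≤ 1 →
        1 / (1 + Real.sqrt t) ≤ (1 - 2 * α * β + β ^ 2) / (1 - β ^ 2)) ∧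
    IsLeast {v : ℝ | ∃ α β : ℝ, 0 ≤ α ∧ α ≤ 1 ∧ 0 ≤ β ∧ β < 1 ∧
        α ^ 2 + β ^ 2 / t ≤ 1 ∧ v = (1 - 2 * α * β + β ^ 2) / (1 - β ^ 2)}
      (1 / (1 + Real.sqrt t)) := by
  set s := Real.sqrt t with hsdef
  have hs0 : 0 < s := Real.sqrt_pos.mpr ht
  have hs2 : s ^ 2 = t := Real.sq_sqrt ht.le
  have hkey : ∀ α β : ℝ, 0 ≤ α → α ≤ 1 → 0 ≤ β → β < 1 → α ^ 2 + β ^ 2 / t ≤ 1 →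
      1 / (1 + s) ≤ (1 - 2 * α * β + β ^ 2) / (1 - β ^ 2) := by
    intro α β hα0 hα1 hβ0 hβ1 hcon
    have hD : 0 < 1 - β ^ 2 := by nlinarith
    have h1 : t * α ^ 2 + β ^ 2 ≤ t := by
      have hc : β ^ 2 / t * t = β ^ 2 := div_mul_cancel₀ _ (ne_of_gt ht)
      nlinarith [mul_le_mul_of_nonneg_right hcon ht.le]
    rw [div_le_div_iff₀ (by linarith) hD]
    have hX : 0 ≤ s * ((1 - 2 * α * β + β ^ 2) * (1 + s) - 1 * (1 - β ^ 2)) := by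
      nlinarith [sq_nonneg (s * α - (1 + s) * β)]
    have := (mul_nonneg_iff_of_pos_left hs0).mp hX
    linarith
  refine ⟨hkey, ⟨?_, ?_⟩⟩
  · -- membership
    set r := Real.sqrt (t + 2 * s + 2) with hrdef
    have hr0 : 0 < r := Real.sqrt_pos.mpr (by linarith)
    have hr2 : r ^ 2 = t + 2 * s + 2 := Real.sq_sqrt (by linarith)
    have hT : (0:ℝ) < t + 2 * s + 2 := by linarith
    have hb2 : (s / r) ^ 2 = t / (t + 2 * s + 2) := by rw [div_pow, hr2, hs2]
    have ha2 : ((1 + s) / r) ^ 2 = (1 + s) ^ 2 / (t + 2 * s + 2) := by rw [div_pow, hr2]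
    have hab : (1 + s) / r * (s / r) = (1 + s) * s / (t + 2 * s + 2) := by
      rw [div_mul_div_comm, ← sq, hr2]
    refine ⟨(1 + s) / r, s / r, by positivity, ?_, by positivity, ?_, ?_, ?_⟩
    · rw [div_le_one hr0]
      nlinarith [sq_nonneg (r - (1 + s))]
    · rw [div_lt_one hr0]
      nlinarith [sq_nonneg (r - s)]
    · rw [ha2, hb2, div_div, mul_comm (t + 2 * s + 2) t, ← div_div,
        div_self (ne_of_gt ht), ← add_div, div_le_one hT]
      nlinarith
    · rw [mul_assoc, hab, hb2]
      rw [eq_div_iff (by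
        intro h
        have h2 : (1 - t / (t + 2 * s + 2)) * (t + 2 * s + 2) = 0 := by rw [h]; ring
        rw [sub_mul, div_mul_cancel₀ _ (ne_of_gt hT), one_mul] at h2
        linarith)]
      field_simp
      ring_nf
      linear_combination (2 * s + 2) * hs2
  · -- lower bound
    rintro v ⟨α, β, h1, h2, h3, h4, h5, rfl⟩
    exact hkey α β h1 h2 h3 h4 h5
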